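/- Every finite tree T with at least one edge satisfies χ'_s(T) = σ(T). -/

import Mathlib

open SimpleGraph

/-- The degree of a vertex (cardinality of its neighbor set). -/
noncomputable def ndeg {V : Type*} (G : SimpleGraph V) (v : V) : ℕ :=
  (G.neighborSet v).ncard

/-- `σ(G)`: the maximum of `deg x + deg y - 1` over all edges `xy` of `G`. -/
noncomputable def sigmaG {V : Type*} (G : SimpleGraph V) : ℕ :=
  sSup {m | ∃ x y, G.Adj x y ∧ m = ndeg G x + ndeg G y - 1}

/-- The maximum degree `Δ(G)`. -/
noncomputable def maxDeg {V : Type*} (G : SimpleGraph V) : ℕ :=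
  sSup (Set.range (ndeg G))

/-- Two edges are at distance at most two: they share an endpoint, or an endpoint of
one is adjacent to an endpoint of the other. -/
def EdgesNear {V : Type*} (G : SimpleGraph V) (e f : Sym2 V) : Prop :=
  ∃ u v, u ∈ e ∧ v ∈ f ∧ (u = v ∨ G.Adj u v)

/-- A strong edge-coloring: every two distinct edges at distance at most two
receive different colors. -/
def IsStrongEdgeColoring {V α : Type*} (G : SimpleGraph V) (φ : Sym2 V → α) : Prop :=
  ∀ e ∈ G.edgeSet, ∀ f ∈ G.edgeSet, e ≠ f → EdgesNear G e f → φ e ≠ φ f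

/-- The strong chromatic index `χ'ₛ(G)`: the least `k` such that `G` has a strong
edge-coloring with colors `0, …, k-1`. -/
noncomputable def strongChromaticIndex {V : Type*} (G : SimpleGraph V) : ℕ :=
  sInf {k | ∃ φ : Sym2 V → ℕ, (∀ e ∈ G.edgeSet, φ e < k) ∧ IsStrongEdgeColoring G φ}

/-- The set of edges incident with a vertex `v`. -/
def Einc {V : Type*} (G : SimpleGraph V) (v : V) : Set (Sym2 V) :=
  {e ∈ G.edgeSet | v ∈ e}

section Aux

variable {V : Type*}

lemma edgesNear_symm {G : SimpleGraph V} {e f : Sym2 V} (h : EdgesNear G e f) :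
    EdgesNear G f e := by
  obtain ⟨u, v, hu, hv, huv⟩ := h
  exact ⟨v, u, hv, hu, huv.imp Eq.symm Adj.symm⟩

lemma eq_of_mem_edge {G : SimpleGraph V} {f : Sym2 V} (hf : f ∈ G.edgeSet) {v : V}
    (hv : v ∈ f) : ∃ z, G.Adj v z ∧ f = s(v, z) := by
  induction f using Sym2.ind with
  | _ x y =>
    rcases Sym2.mem_iff.1 hv with rfl | rfl
    · exact ⟨y, G.mem_edgeSet.1 hf, rfl⟩
    · exact ⟨x, (G.mem_edgeSet.1 hf).symm, Sym2.eq_swap⟩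

lemma einc_eq_image (G : SimpleGraph V) (v : V) :
    Einc G v = (fun z => s(v, z)) '' G.neighborSet v := by
  ext f
  constructor
  · rintro ⟨hf, hv⟩
    obtain ⟨z, hz, rfl⟩ := eq_of_mem_edge hf hv
    exact ⟨z, hz, rfl⟩
  · rintro ⟨z, hz, rfl⟩
    exact ⟨G.mem_edgeSet.2 hz, Sym2.mem_mk_left _ _⟩

lemma ncard_einc (G : SimpleGraph V) (v : V) : (Einc G v).ncard = ndeg G v := by
  rw [einc_eq_image, Set.ncard_image_of_injOn]
  · rfl
  · exact fun z1 _ z2 _ h => Sym2.congr_right.1 h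

lemma einc_inter {G : SimpleGraph V} {x y : V} (h : G.Adj x y) :
    Einc G x ∩ Einc G y = {s(x, y)} := by
  ext f
  constructor
  · rintro ⟨⟨hf, hfx⟩, ⟨-, hfy⟩⟩
    obtain ⟨z, hz, rfl⟩ := eq_of_mem_edge hf hfx
    rcases Sym2.mem_iff.1 hfy with rfl | rfl
    · exact absurd rfl h.ne'
    · rfl
  · rintro (rfl : f = s(x, y))
    exact ⟨⟨G.mem_edgeSet.2 h, Sym2.mem_mk_left _ _⟩, ⟨G.mem_edgeSet.2 h, Sym2.mem_mk_right _ _⟩⟩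

lemma ncard_einc_union [Fintype V] {G : SimpleGraph V} {x y : V} (h : G.Adj x y) :
    (Einc G x ∪ Einc G y).ncard = ndeg G x + ndeg G y - 1 := by
  have hu := Set.ncard_union_add_ncard_inter (Einc G x) (Einc G y) (Set.toFinite _) (Set.toFinite _)
  rw [einc_inter h, Set.ncard_singleton, ncard_einc, ncard_einc] at hu
  omega

lemma near_of_mem_einc_union {G : SimpleGraph V} {x y : V} (h : G.Adj x y) {f g : Sym2 V}
    (hf : f ∈ Einc G x ∪ Einc G y) (hg : g ∈ Einc G x ∪ Einc G y) : EdgesNear G f g := by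
  rcases hf with ⟨-, hfx⟩ | ⟨-, hfy⟩ <;> rcases hg with ⟨-, hgx⟩ | ⟨-, hgy⟩
  · exact ⟨x, x, hfx, hgx, Or.inl rfl⟩
  · exact ⟨x, y, hfx, hgy, Or.inr h⟩
  · exact ⟨y, x, hfy, hgx, Or.inr h.symm⟩
  · exact ⟨y, y, hfy, hgy, Or.inl rfl⟩

lemma support_prefix_of_path {G : SimpleGraph V} (hG : G.IsAcyclic) {u v x : V}
    {w : G.Walk u v} (hw : w.IsPath) (hx : x ∈ w.support) {p : G.Walk u x} (hp : p.IsPath) :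
    ∃ l, w.support = p.support ++ l := by
  classical
  have h2 : w.takeUntil x hx = p := by
    have h3 := hG.path_unique ⟨w.takeUntil x hx, hw.takeUntil hx⟩ ⟨p, hp⟩
    exact congrArg Subtype.val h3
  refine ⟨(w.dropUntil x hx).support.tail, ?_⟩
  conv_lhs => rw [← Walk.take_spec w hx]
  rw [Walk.support_append, h2]

end Aux
lemma exists_strong_coloring {V : Type*} [Fintype V] :
    ∀ (n : ℕ) (G : SimpleGraph V), G.edgeSet.ncard ≤ n → G.IsAcyclic →
    ∀ k : ℕ, (∀ x y, G.Adj x y → ndeg G x + ndeg G y ≤ k + 1) →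
    ∃ φ : Sym2 V → ℕ, (∀ e ∈ G.edgeSet, φ e < k) ∧ IsStrongEdgeColoring G φ := by
  intro n
  induction n with
  | zero =>
    intro G hcard _ k _
    have hempty : G.edgeSet = ∅ := by
      rw [← Set.ncard_eq_zero (G.edgeSet.toFinite)]; omega
    exact ⟨fun _ => 0, fun e he => by simp [hempty] at he,
      fun e he => by simp [hempty] at he⟩
  | succ n ih =>
    intro G hcard hG k hk
    classical
    by_cases hne : G.edgeSet = ∅
    · exact ⟨fun _ => 0, fun e he => by simp [hne] at he,
        fun e he => by simp [hne] at he⟩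
    obtain ⟨e0, he0⟩ := Set.nonempty_iff_ne_empty.2 hne
    have hadj : ∃ x y : V, G.Adj x y := by
      revert he0
      induction e0 using Sym2.ind with
      | _ x y => exact fun h => ⟨x, y, G.mem_edgeSet.1 h⟩
    obtain ⟨x0, y0, hxy0⟩ := hadj
    set L : Set ℕ := {m | ∃ (x y : V) (w : G.Walk x y), w.IsPath ∧ w.length = m} with hLdef
    have hbdd : BddAbove L := by
      refine ⟨Fintype.card V, ?_⟩
      rintro m ⟨x, y, w, hw, rfl⟩
      exact hw.length_lt.le
    have h1L : (1 : ℕ) ∈ L :=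
      ⟨x0, y0, Walk.cons hxy0 Walk.nil, by simp [Walk.isPath_def, hxy0.ne], by simp⟩
    have hNL : sSup L ∈ L := Nat.sSup_mem ⟨1, h1L⟩ hbdd
    set N := sSup L with hNdef
    have hmax : ∀ (x y : V) (w : G.Walk x y), w.IsPath → w.length ≤ N :=
      fun x y w hw => le_csSup hbdd ⟨x, y, w, hw, rfl⟩
    have h1N : 1 ≤ N := le_csSup hbdd h1L
    obtain ⟨a, b, w, hw, hwlen⟩ := hNL
    cases w with
    | nil => rw [Walk.length_nil] at hwlen; omega
    | @cons _ v1 _ h1 w1 =>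
      rw [Walk.length_cons] at hwlen
      have hw1 : w1.IsPath := ((Walk.cons_isPath_iff h1 w1).1 hw).1
      have haw1 : a ∉ w1.support := ((Walk.cons_isPath_iff h1 w1).1 hw).2
      have hL1 : ∀ x, G.Adj a x → x = v1 := by
        intro x hx
        by_contra hxv
        by_cases hxs : x ∈ w1.support
        · have hp : (Walk.cons hx Walk.nil : G.Walk a x).IsPath := by
            simp [Walk.isPath_def, hx.ne]
          have hxs' : x ∈ (Walk.cons h1 w1).support := by
            rw [Walk.support_cons]; exact List.mem_cons_of_mem _ hxs
          obtain ⟨l, hl⟩ := support_prefix_of_path hG hw hxs' hp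
          have hsup : (Walk.cons h1 w1).support = a :: v1 :: w1.support.tail := by
            conv_lhs => rw [Walk.support_cons, Walk.support_eq_cons]
          rw [hsup] at hl
          simp only [Walk.support_cons, Walk.support_nil, List.cons_append, List.nil_append,
            List.cons.injEq] at hl
          exact hxv hl.2.1.symm
        · have hxs' : x ∉ (Walk.cons h1 w1).support := by
            rw [Walk.support_cons]
            simp only [List.mem_cons, not_or]
            exact ⟨hx.ne', hxs⟩
          have hW : (Walk.cons hx.symm (Walk.cons h1 w1)).IsPath :=
            (Walk.cons_isPath_iff _ _).2 ⟨hw, hxs'⟩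
          have := hmax _ _ _ hW
          simp only [Walk.length_cons] at this
          omega
      set e : Sym2 V := s(a, v1) with hedef
      set G' : SimpleGraph V := G.deleteEdges {e} with hG'def
      have heE : e ∈ G.edgeSet := G.mem_edgeSet.2 h1
      have hG'edge : G'.edgeSet = G.edgeSet \ {e} := G.edgeSet_deleteEdges {e}
      have hG'adj : ∀ {x y : V}, G'.Adj x y ↔ G.Adj x y ∧ s(x, y) ≠ e := by
        intro x y
        rw [hG'def, SimpleGraph.deleteEdges_adj]
        simp
      have ha_iso : ∀ g ∈ G'.edgeSet, a ∉ g := by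
        intro g hg hag
        obtain ⟨z, hz, rfl⟩ := eq_of_mem_edge hg hag
        have hz' := hG'adj.1 hz
        have := hL1 z hz'.1
        subst this
        exact hz'.2 rfl
      set F : Set (Sym2 V) := {f | f ∈ G'.edgeSet ∧ EdgesNear G e f} with hFdef
      have hk1 : 1 ≤ k := by
        have hka := hk a v1 h1
        have ha1 : 0 < ndeg G a := (Set.ncard_pos (Set.toFinite _)).2 ⟨v1, h1⟩
        have hb1 : 0 < ndeg G v1 := (Set.ncard_pos (Set.toFinite _)).2 ⟨a, h1.symm⟩
        omega
      have hFlt : F.ncard < k := by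
        rcases eq_or_lt_of_le h1N with hN1 | hN2
        · -- N = 1 : w1 is nil
          cases w1 with
          | cons h2 w2 =>
            rw [Walk.length_cons] at hwlen
            omega
          | nil =>
            rw [Walk.length_nil] at hwlen
            have hNv1 : ∀ q, G.Adj b q → q = a := by
              intro q hq
              by_contra hqa
              have hp : (Walk.cons hq.symm (Walk.cons h1.symm Walk.nil) : G.Walk q a).IsPath := by
                simp [Walk.isPath_def, hq.ne', hqa, h1.ne']
              have := hmax _ _ _ hp
              simp only [Walk.length_cons, Walk.length_nil] at this
              omega
            have hF0 : F = ∅ := by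
              ext f
              simp only [hFdef, Set.mem_setOf_eq, Set.mem_empty_iff_false, iff_false, not_and]
              rintro hf' ⟨u, v, hu, hv, huv⟩
              have hvav1 : v = a ∨ v = b := by
                rw [hedef] at hu
                rcases Sym2.mem_iff.1 hu with rfl | rfl
                · rcases huv with rfl | huv
                  · exact Or.inl rfl
                  · exact Or.inr (hL1 v huv)
                · rcases huv with rfl | huv
                  · exact Or.inr rfl
                  · exact Or.inl (hNv1 v huv)
              rcases hvav1 with rfl | rfl
              · exact ha_iso f hf' hv
              · obtain ⟨z, hz, rfl⟩ := eq_of_mem_edge hf' hv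
                have hz' := hG'adj.1 hz
                have hza := hNv1 z hz'.1
                subst hza
                exact hz'.2 (by rw [hedef]; exact Sym2.eq_swap)
            rw [hF0, Set.ncard_empty]
            omega
        · -- N ≥ 2 : w1 is a cons
          cases w1 with
          | nil =>
            rw [Walk.length_nil] at hwlen
            omega
          | @cons _ v2 _ h2 w2 =>
            rw [Walk.length_cons] at hwlen
            have hv2a : v2 ≠ a := by
              rintro rfl
              exact haw1 (by rw [Walk.support_cons]; exact List.mem_cons_of_mem _ w2.start_mem_support)
            have hsupp1 : (Walk.cons h2 w2).support = v1 :: v2 :: w2.support.tail := by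
              conv_lhs => rw [Walk.support_cons, Walk.support_eq_cons]
            have hL2 : ∀ q, G.Adj v1 q → q ≠ a → q ≠ v2 → ∀ z, G.Adj q z → z = v1 := by
              intro q hq hqa hqv2
              have hq1 : q ∉ (Walk.cons h2 w2).support := by
                intro hqs
                have hp : (Walk.cons hq Walk.nil : G.Walk v1 q).IsPath := by
                  simp [Walk.isPath_def, hq.ne]
                obtain ⟨l, hl⟩ := support_prefix_of_path hG hw1 hqs hp
                rw [hsupp1] at hl
                simp only [Walk.support_cons, Walk.support_nil, List.cons_append,
                  List.nil_append, List.cons.injEq] at hl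
                exact hqv2 hl.2.1.symm
              intro z hz
              by_contra hzv1
              have hza : z ≠ a := by
                rintro rfl
                exact hq.ne' (hL1 q hz.symm)
              have hzs : z ∉ (Walk.cons h2 w2).support := by
                intro hzs
                have hp : (Walk.cons hq (Walk.cons hz Walk.nil) : G.Walk v1 z).IsPath := by
                  simp [Walk.isPath_def, hq.ne, hz.ne, Ne.symm hzv1]
                obtain ⟨l, hl⟩ := support_prefix_of_path hG hw1 hzs hp
                rw [hsupp1] at hl
                simp only [Walk.support_cons, Walk.support_nil, List.cons_append,
                  List.nil_append, List.cons.injEq] at hl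
                exact hqv2 hl.2.1.symm
              have hW : (Walk.cons hz.symm (Walk.cons hq.symm (Walk.cons h2 w2))).IsPath := by
                refine (Walk.cons_isPath_iff _ _).2 ⟨(Walk.cons_isPath_iff _ _).2 ⟨hw1, hq1⟩, ?_⟩
                rw [Walk.support_cons]
                simp only [List.mem_cons, not_or]
                exact ⟨hz.ne', hzs⟩
              have := hmax _ _ _ hW
              simp only [Walk.length_cons] at this
              omega
            have hFsub : F ⊆ Einc G' v1 ∪ Einc G' v2 := by
              rintro f ⟨hf', u, v, hu, hv, huv⟩
              have hvcases : v = a ∨ v = v1 ∨ v = v2 ∨ (G.Adj v1 v ∧ v ≠ a ∧ v ≠ v2) := by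
                rw [hedef] at hu
                rcases Sym2.mem_iff.1 hu with rfl | rfl
                · rcases huv with rfl | huv
                  · exact Or.inl rfl
                  · exact Or.inr (Or.inl (hL1 v huv))
                · rcases huv with rfl | huv
                  · exact Or.inr (Or.inl rfl)
                  · by_cases hva : v = a
                    · exact Or.inl hva
                    · by_cases hvv2 : v = v2
                      · exact Or.inr (Or.inr (Or.inl hvv2))
                      · exact Or.inr (Or.inr (Or.inr ⟨huv, hva, hvv2⟩))
              rcases hvcases with rfl | rfl | rfl | ⟨hadjv, hva, hvv2⟩
              · exact absurd hv (ha_iso f hf')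
              · exact Or.inl ⟨hf', hv⟩
              · exact Or.inr ⟨hf', hv⟩
              · obtain ⟨z, hz, rfl⟩ := eq_of_mem_edge hf' hv
                have hzv1 : z = v1 := hL2 v hadjv hva hvv2 z (hG'adj.1 hz).1
                subst hzv1
                exact Or.inl ⟨hf', Sym2.mem_mk_right _ _⟩
            have hadj' : G'.Adj v1 v2 := by
              refine hG'adj.2 ⟨h2, ?_⟩
              rw [hedef]
              intro hcontra
              rcases Sym2.eq_iff.1 hcontra with ⟨h', _⟩ | ⟨_, h'⟩
              · exact h1.ne' h'
              · exact hv2a h'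
            have hinter : s(v1, v2) ∈ Einc G' v1 ∩ Einc G' v2 := by
              constructor
              · exact ⟨G'.mem_edgeSet.2 hadj', Sym2.mem_mk_left _ _⟩
              · exact ⟨G'.mem_edgeSet.2 hadj', Sym2.mem_mk_right _ _⟩
            have hndeg1 : ndeg G' v1 + 1 = ndeg G v1 := by
              have hset : G'.neighborSet v1 = G.neighborSet v1 \ {a} := by
                ext z
                simp only [SimpleGraph.mem_neighborSet, Set.mem_diff, Set.mem_singleton_iff]
                rw [hG'adj]
                constructor
                · rintro ⟨h, hne'⟩
                  refine ⟨h, fun hza => hne' ?_⟩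
                  subst hza
                  rw [hedef]
                  exact Sym2.eq_swap
                · rintro ⟨h, hza⟩
                  refine ⟨h, fun hcontra => ?_⟩
                  rw [hedef] at hcontra
                  rcases Sym2.eq_iff.1 hcontra with ⟨h', _⟩ | ⟨_, h'⟩
                  · exact h1.ne' h'
                  · exact hza h'
              have hmem : a ∈ G.neighborSet v1 := h1.symm
              have hpos : 0 < (G.neighborSet v1).ncard :=
                (Set.ncard_pos (Set.toFinite _)).2 ⟨a, hmem⟩
              simp only [ndeg]
              rw [hset, Set.ncard_diff_singleton_of_mem hmem]
              omega
            have hndeg2 : ndeg G' v2 = ndeg G v2 := by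
              have hset : G'.neighborSet v2 = G.neighborSet v2 := by
                ext z
                simp only [SimpleGraph.mem_neighborSet]
                rw [hG'adj]
                constructor
                · exact fun h => h.1
                · intro h
                  refine ⟨h, fun hcontra => ?_⟩
                  rw [hedef] at hcontra
                  rcases Sym2.eq_iff.1 hcontra with ⟨h', _⟩ | ⟨h', _⟩
                  · exact hv2a h'
                  · exact h2.ne' h'
              simp only [ndeg]
              rw [hset]
            have hcardU := Set.ncard_union_add_ncard_inter (Einc G' v1) (Einc G' v2)
              (Set.toFinite _) (Set.toFinite _)
            rw [ncard_einc, ncard_einc] at hcardU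
            have hint1 : 0 < (Einc G' v1 ∩ Einc G' v2).ncard :=
              (Set.ncard_pos (Set.toFinite _)).2 ⟨s(v1, v2), hinter⟩
            have hle : F.ncard ≤ (Einc G' v1 ∪ Einc G' v2).ncard :=
              Set.ncard_le_ncard hFsub (Set.toFinite _)
            have hkk := hk v1 v2 h2
            omega
      have hG'card : G'.edgeSet.ncard ≤ n := by
        rw [hG'edge, Set.ncard_diff_singleton_of_mem heE]
        have h1c : 0 < G.edgeSet.ncard := (Set.ncard_pos (Set.toFinite _)).2 ⟨e, heE⟩
        omega
      have hG'ac : G'.IsAcyclic := by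
        intro v c hc
        exact hG (c.mapLe (G.deleteEdges_le {e})) (hc.mapLe _)
      have hG'deg : ∀ x y, G'.Adj x y → ndeg G' x + ndeg G' y ≤ k + 1 := by
        intro x y hxy
        have hmono : ∀ z, ndeg G' z ≤ ndeg G z := fun z =>
          Set.ncard_le_ncard (fun t ht => (hG'adj.1 ht).1) (Set.toFinite _)
        have hkxy := hk x y (hG'adj.1 hxy).1
        have m1 := hmono x
        have m2 := hmono y
        omega
      obtain ⟨φ', hφ'lt, hφ's⟩ := ih G' hG'card hG'ac k hG'deg
      have hcex : (Set.Iio k \ (φ' '' F)).Nonempty := by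
        rw [Set.diff_nonempty]
        intro hsub
        have hc1 : (Set.Iio k).ncard ≤ (φ' '' F).ncard :=
          Set.ncard_le_ncard hsub (Set.toFinite _)
        have hc2 : (φ' '' F).ncard ≤ F.ncard := Set.ncard_image_le (Set.toFinite _)
        have hc3 : (Set.Iio k).ncard = k := by
          rw [← Finset.coe_range, Set.ncard_coe_finset, Finset.card_range]
        omega
      obtain ⟨c, hck, hcF⟩ := hcex
      rw [Set.mem_Iio] at hck
      refine ⟨fun f => if f = e then c else φ' f, ?_, ?_⟩
      · intro f hf
        by_cases hfe : f = e
        · simpa [hfe] using hck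
        · have hf' : f ∈ G'.edgeSet := by rw [hG'edge]; exact ⟨hf, hfe⟩
          simpa [hfe] using hφ'lt f hf'
      · intro f hf g hg hfg hnear
        by_cases hfe : f = e <;> by_cases hge : g = e
        · exact absurd (hfe.trans hge.symm) hfg
        · have hg' : g ∈ G'.edgeSet := by rw [hG'edge]; exact ⟨hg, hge⟩
          have hgF : g ∈ F := ⟨hg', by rw [← hfe]; exact hnear⟩
          simp only [if_pos hfe, if_neg hge]
          intro hcg
          exact hcF ⟨g, hgF, hcg.symm⟩
        · have hf' : f ∈ G'.edgeSet := by rw [hG'edge]; exact ⟨hf, hfe⟩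
          have hfF : f ∈ F := ⟨hf', edgesNear_symm (by rw [← hge]; exact hnear)⟩
          simp only [if_neg hfe, if_pos hge]
          intro hcg
          exact hcF ⟨f, hfF, hcg⟩
        · have hf' : f ∈ G'.edgeSet := by rw [hG'edge]; exact ⟨hf, hfe⟩
          have hg' : g ∈ G'.edgeSet := by rw [hG'edge]; exact ⟨hg, hge⟩
          obtain ⟨u, v, hu, hv, huv⟩ := hnear
          have hnear' : EdgesNear G' f g := by
            refine ⟨u, v, hu, hv, ?_⟩
            rcases huv with rfl | huv
            · exact Or.inl rfl
            · refine Or.inr (hG'adj.2 ⟨huv, fun hueq => ?_⟩)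
              rw [hedef] at hueq
              rcases Sym2.eq_iff.1 hueq with ⟨rfl, rfl⟩ | ⟨rfl, rfl⟩
              · exact ha_iso f hf' hu
              · exact ha_iso g hg' hv
          simp only [if_neg hfe, if_neg hge]
          exact hφ's f hf' g hg' hfg hnear'

theorem strong_chromatic_index_of_tree {V : Type*} [Fintype V] (T : SimpleGraph V)
    (hT : T.IsTree) (hE : T.edgeSet.Nonempty) :
    strongChromaticIndex T = sigmaG T := by
  classical
  have hac : T.IsAcyclic := hT.IsAcyclic
  have hσne : {m | ∃ x y, T.Adj x y ∧ m = ndeg T x + ndeg T y - 1}.Nonempty := by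
    obtain ⟨e0, he0⟩ := hE
    revert he0
    induction e0 using Sym2.ind with
    | _ x y => exact fun h => ⟨_, x, y, T.mem_edgeSet.1 h, rfl⟩
  have hbddσ : BddAbove {m | ∃ x y, T.Adj x y ∧ m = ndeg T x + ndeg T y - 1} := by
    refine ⟨2 * Fintype.card V, ?_⟩
    rintro m ⟨x, y, -, rfl⟩
    have hx : ndeg T x ≤ Fintype.card V := by
      have h := Set.ncard_le_ncard (Set.subset_univ (T.neighborSet x)) (Set.toFinite _)
      rwa [Set.ncard_univ, Nat.card_eq_fintype_card] at h
    have hy : ndeg T y ≤ Fintype.card V := by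
      have h := Set.ncard_le_ncard (Set.subset_univ (T.neighborSet y)) (Set.toFinite _)
      rwa [Set.ncard_univ, Nat.card_eq_fintype_card] at h
    simp only [ndeg] at *
    omega
  have hσub : ∀ x y, T.Adj x y → ndeg T x + ndeg T y ≤ sigmaG T + 1 := by
    intro x y hxy
    have h1 : ndeg T x + ndeg T y - 1 ≤ sigmaG T := le_csSup hbddσ ⟨x, y, hxy, rfl⟩
    have h2 : 0 < ndeg T x := (Set.ncard_pos (Set.toFinite _)).2 ⟨y, hxy⟩
    omega
  obtain ⟨φ, hφ1, hφ2⟩ := exists_strong_coloring T.edgeSet.ncard T le_rfl hac (sigmaG T) hσub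
  have hmem : sigmaG T ∈
      {k | ∃ φ : Sym2 V → ℕ, (∀ e ∈ T.edgeSet, φ e < k) ∧ IsStrongEdgeColoring T φ} :=
    ⟨φ, hφ1, hφ2⟩
  refine le_antisymm (Nat.sInf_le hmem) ?_
  refine le_csInf ⟨_, hmem⟩ ?_
  rintro k ⟨ψ, hψ1, hψ2⟩
  refine csSup_le hσne ?_
  rintro m ⟨x, y, hxy, rfl⟩
  have hUsub : Einc T x ∪ Einc T y ⊆ T.edgeSet := by
    rintro f (⟨hf, -⟩ | ⟨hf, -⟩) <;> exact hf
  have hinj : Set.InjOn ψ (Einc T x ∪ Einc T y) := by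
    intro f hf g hg hfg
    by_contra hnefg
    exact hψ2 f (hUsub hf) g (hUsub hg) hnefg (near_of_mem_einc_union hxy hf hg) hfg
  have h1 : (Einc T x ∪ Einc T y).ncard = ndeg T x + ndeg T y - 1 := ncard_einc_union hxy
  have h2 : (ψ '' (Einc T x ∪ Einc T y)).ncard = (Einc T x ∪ Einc T y).ncard :=
    Set.ncard_image_of_injOn hinj
  have h3 : ψ '' (Einc T x ∪ Einc T y) ⊆ ↑(Finset.range k) := by
    rintro - ⟨f, hf, rfl⟩
    simp only [Finset.coe_range, Set.mem_Iio]
    exact hψ1 f (hUsub hf)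
  have h4 := Set.ncard_le_ncard h3 (Finset.range k).finite_toSet
  rw [Set.ncard_coe_finset, Finset.card_range] at h4
  omega
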